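/- Let g(x*_k) = ∏_{j=1}^p g_j(x*_{kj}) where each g_j is defined as a marginal probability ∫ ∏_{i ∈ O_{kj}} q_j(x_{ij} | ξ) dq_j(ξ) over the observed entries O_{kj} for covariate j. Then for any missingness pattern, g(x*_k) equals the integral over all missing covariate values of the complete-data similarity ∏_j ∫ ∏_{i ∈ C_k} q_j(x_{ij} | ξ) dq_j(ξ). That is, skipping missing covariates in the similarity function is equivalent to marginalizing them under the auxiliary model. -/

import Mathlib

open MeasureTheory Finset

lemma measurable_sigmaUncurry' {σ : Type*} {κ : σ → Type*} :
    Measurable (Sigma.uncurry : ((j : σ) → κ j → ℝ) → ((x : (j : σ) × κ j) → ℝ)) := by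
  apply measurable_pi_lambda
  intro x
  exact (measurable_pi_apply x.2).comp (measurable_pi_apply x.1)

lemma sigmaUncurry_measurePreserving {σ : Type*} [Fintype σ] {κ : σ → Type*}
    [∀ j, Fintype (κ j)] :
    MeasurePreserving (Sigma.uncurry : ((j : σ) → κ j → ℝ) → ((x : (j : σ) × κ j) → ℝ))
      (Measure.pi fun j => Measure.pi fun _ : κ j => volume)
      (Measure.pi fun _ : (j : σ) × κ j => volume) := by
  constructor
  · exact measurable_sigmaUncurry'
  · refine (Measure.pi_eq fun s hs => ?_).symm
    have hpre : (Sigma.uncurry : ((j : σ) → κ j → ℝ) → _) ⁻¹' (Set.pi Set.univ s) =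
        Set.pi Set.univ (fun j => Set.pi Set.univ (fun i => s ⟨j, i⟩)) := by
      ext v
      simp [Sigma.uncurry, Set.mem_pi, Sigma.forall]
    rw [Measure.map_apply measurable_sigmaUncurry' (MeasurableSet.univ_pi hs), hpre,
      Measure.pi_pi]
    simp_rw [Measure.pi_pi]
    rw [← Finset.univ_sigma_univ, Finset.prod_sigma]

/-- `Sigma.uncurry` is a measurable embedding (it is a measurable equiv). -/
def sigmaPiUncurryEquiv {σ : Type*} {κ : σ → Type*} :
    ((j : σ) → κ j → ℝ) ≃ᵐ ((x : (j : σ) × κ j) → ℝ) where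
  toEquiv := (Equiv.piCurry (fun (j : σ) (_ : κ j) => ℝ)).symm
  measurable_toFun := measurable_sigmaUncurry'
  measurable_invFun := by
    apply measurable_pi_lambda
    intro j
    apply measurable_pi_lambda
    intro i
    exact measurable_pi_apply (⟨j, i⟩ : (j : σ) × κ j)


/-- Skipping missing covariates in the PPMx similarity function is equivalent to
marginalizing them under the auxiliary model: with cluster `C`, observed sets
`O j ⊆ C` for each covariate `j`, auxiliary densities `q j (· | ξ)` with priors
`ν j`, the product of per-covariate marginals over observed entries equals the
integral, over all missing covariate values, of the complete-data similarity. -/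
theorem skipping_equals_marginalizing
    {ι : Type*} [Fintype ι] [DecidableEq ι]
    {Ξ : Type*} [MeasurableSpace Ξ]
    (p : ℕ) (C : Finset ι) (O : Fin p → Finset ι) (hO : ∀ j, O j ⊆ C)
    (ν : Fin p → Measure Ξ) [∀ j, IsProbabilityMeasure (ν j)]
    (q : Fin p → Ξ → ℝ → ℝ)
    (hq_nonneg : ∀ j ξ x, 0 ≤ q j ξ x)
    (hq_density : ∀ j ξ, ∫ x : ℝ, q j ξ x = 1)
    (x : ι → Fin p → ℝ)
    (hFub : ∀ j, Integrable
      (fun w : Ξ × (↥(C \ O j) → ℝ) =>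
        ∏ i ∈ C, q j w.1
          (if h : i ∈ O j then x i j else
            if h2 : i ∈ C \ O j then w.2 ⟨i, h2⟩ else 0))
      ((ν j).prod volume))
    (hInt : Integrable
      (fun u : ((j : Fin p) × ↥(C \ O j)) → ℝ =>
        ∏ j, ∫ ξ, (∏ i ∈ C, q j ξ
          (if h : i ∈ O j then x i j else
            if h2 : i ∈ C \ O j then u ⟨j, ⟨i, h2⟩⟩ else 0)) ∂(ν j))) :
    (∫ u : ((j : Fin p) × ↥(C \ O j)) → ℝ,
      ∏ j, ∫ ξ, (∏ i ∈ C, q j ξ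
        (if h : i ∈ O j then x i j else
          if h2 : i ∈ C \ O j then u ⟨j, ⟨i, h2⟩⟩ else 0)) ∂(ν j)) =
    ∏ j, ∫ ξ, (∏ i ∈ O j, q j ξ (x i j)) ∂(ν j) := by
  -- per-covariate function of the missing values
  set F : (j : Fin p) → (↥(C \ O j) → ℝ) → ℝ := fun j v =>
    ∫ ξ, (∏ i ∈ C, q j ξ
      (if h : i ∈ O j then x i j else
        if h2 : i ∈ C \ O j then v ⟨i, h2⟩ else 0)) ∂(ν j) with hF
  -- Step 1: pass to the curried variables
  have step1 :
      (∫ u : ((j : Fin p) × ↥(C \ O j)) → ℝ,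
        ∏ j, ∫ ξ, (∏ i ∈ C, q j ξ
          (if h : i ∈ O j then x i j else
            if h2 : i ∈ C \ O j then u ⟨j, ⟨i, h2⟩⟩ else 0)) ∂(ν j)) =
      ∫ v : (j : Fin p) → (↥(C \ O j) → ℝ), ∏ j, F j (v j) := by
    have := (sigmaUncurry_measurePreserving (σ := Fin p)
        (κ := fun j => ↥(C \ O j))).integral_comp
      (sigmaPiUncurryEquiv (σ := Fin p) (κ := fun j => ↥(C \ O j))).measurableEmbedding
      (fun u : ((j : Fin p) × ↥(C \ O j)) → ℝ =>
        ∏ j, ∫ ξ, (∏ i ∈ C, q j ξ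
          (if h : i ∈ O j then x i j else
            if h2 : i ∈ C \ O j then u ⟨j, ⟨i, h2⟩⟩ else 0)) ∂(ν j))
    rw [MeasureTheory.volume_pi, ← this]
    rfl
  rw [step1, MeasureTheory.volume_pi, MeasureTheory.integral_fintype_prod_eq_prod (ι := Fin p) F]
  -- Step 2: per-covariate identity
  refine Finset.prod_congr rfl fun j _ => ?_
  have swap := MeasureTheory.integral_integral_swap
    (f := fun (ξ : Ξ) (v : ↥(C \ O j) → ℝ) =>
      ∏ i ∈ C, q j ξ
        (if h : i ∈ O j then x i j else
          if h2 : i ∈ C \ O j then v ⟨i, h2⟩ else 0)) (hFub j)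
  have : (∫ v, F j v) = ∫ ξ, (∫ v : ↥(C \ O j) → ℝ,
      ∏ i ∈ C, q j ξ
        (if h : i ∈ O j then x i j else
          if h2 : i ∈ C \ O j then v ⟨i, h2⟩ else 0)) ∂(ν j) := swap.symm
  rw [this]
  refine integral_congr_ae (Filter.Eventually.of_forall fun ξ => ?_)
  -- now fixed ξ : integrate out the missing values
  have hsplit : ∀ v : ↥(C \ O j) → ℝ,
      (∏ i ∈ C, q j ξ
        (if h : i ∈ O j then x i j else
          if h2 : i ∈ C \ O j then v ⟨i, h2⟩ else 0)) =
      (∏ i ∈ O j, q j ξ (x i j)) * ∏ i : ↥(C \ O j), q j ξ (v i) := by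
    intro v
    rw [← Finset.prod_sdiff (hO j), mul_comm]
    congr 1
    · exact Finset.prod_congr rfl fun i hi => by rw [dif_pos hi]
    · rw [← Finset.prod_attach (C \ O j) (fun i => q j ξ
        (if h : i ∈ O j then x i j else
          if h2 : i ∈ C \ O j then v ⟨i, h2⟩ else 0)), Finset.univ_eq_attach]
      refine Finset.prod_congr rfl fun i _ => ?_
      have hi := i.2
      have hno : (i : ι) ∉ O j := (Finset.mem_sdiff.mp hi).2
      rw [dif_neg hno, dif_pos hi]
  simp_rw [hsplit]
  rw [MeasureTheory.integral_const_mul, MeasureTheory.volume_pi,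
    MeasureTheory.integral_fintype_prod_eq_prod (ι := ↥(C \ O j)) (fun _ => q j ξ)]
  simp [hq_density j ξ]
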